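/- Let β > 0. There exist constants C, c > 0 such that for all x, y, t > 0 with xy ≤ t, the derivative of the Bessel heat kernel satisfies |∂_x T_t(x,y)| ≤ C t^{-1/2} (xy/t)^{β} exp(-(x²+y²)/(c t)) (1/x + x/t), where T_t(x,y) = (xy)^{1/2}/(2t) · I_{β-1/2}(xy/(2t)) · exp(-(x²+y²)/(4t)). -/

import Mathlib

open Real Set MeasureTheory

/-- Modified Bessel function of the first kind (series definition). -/
noncomputable def besselI (ν x : ℝ) : ℝ :=
  ∑' n : ℕ, (x/2) ^ ν * (x/2) ^ (2*n) / (Nat.factorial n * Real.Gamma (n + ν + 1))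

/-- The Bessel heat kernel. -/
noncomputable def TB (β t x y : ℝ) : ℝ :=
  (x*y) ^ ((1:ℝ)/2) / (2*t) * besselI (β - 1/2) (x*y/(2*t)) * Real.exp (-(x^2+y^2)/(4*t))

noncomputable def aC (ν : ℝ) (n : ℕ) : ℝ := 1 / (Nat.factorial n * Real.Gamma (n + ν + 1))
noncomputable def hF (ν s : ℝ) : ℝ := ∑' n : ℕ, aC ν n * s ^ n
noncomputable def hD (ν s : ℝ) : ℝ := ∑' n : ℕ, (n : ℝ) * aC ν n * s ^ (n - 1)
noncomputable def KC (ν : ℝ) : ℝ := 1 / Real.Gamma (ν + 1)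
noncomputable def MC (ν : ℝ) : ℝ := (15 * KC ν) * (1 - 2/15 : ℝ)⁻¹

lemma gamma_lb (ν : ℝ) (hν : (1:ℝ)/2 < ν + 1) (n : ℕ) :
    Real.Gamma (ν+1) * (1/2)^n ≤ Real.Gamma ((n:ℝ) + ν + 1) := by
  induction n with
  | zero => simp
  | succ n ih =>
    have hn : (0:ℝ) ≤ (n:ℝ) := Nat.cast_nonneg n
    have h1 : (0:ℝ) < (n:ℝ) + ν + 1 := by linarith
    have h2 : Real.Gamma (((n:ℕ)+1:ℕ) + ν + 1) = ((n:ℝ) + ν + 1) * Real.Gamma ((n:ℝ) + ν + 1) := by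
      push_cast
      rw [show (n:ℝ) + 1 + ν + 1 = ((n:ℝ) + ν + 1) + 1 by ring, Real.Gamma_add_one h1.ne']
    rw [h2]
    have h3 : (1:ℝ)/2 ≤ (n:ℝ) + ν + 1 := by linarith
    have hg : 0 < Real.Gamma ((n:ℝ) + ν + 1) := Real.Gamma_pos_of_pos h1
    calc Real.Gamma (ν+1) * (1/2)^(n+1) = (1/2) * (Real.Gamma (ν+1) * (1/2)^n) := by ring
    _ ≤ (1/2) * Real.Gamma ((n:ℝ) + ν + 1) := by linarith
    _ ≤ ((n:ℝ) + ν + 1) * Real.Gamma ((n:ℝ) + ν + 1) := by nlinarith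

lemma aC_pos (ν : ℝ) (hν : (1:ℝ)/2 < ν + 1) (n : ℕ) : 0 < aC ν n := by
  have hn : (0:ℝ) ≤ (n:ℝ) := Nat.cast_nonneg n
  have h1 : (0:ℝ) < (n:ℝ) + ν + 1 := by linarith
  have := Real.Gamma_pos_of_pos h1
  have hf : (0:ℝ) < (Nat.factorial n : ℝ) := by positivity
  unfold aC; positivity

lemma KC_pos (ν : ℝ) (hν : (1:ℝ)/2 < ν + 1) : 0 < KC ν := by
  have := Real.Gamma_pos_of_pos (show (0:ℝ) < ν + 1 by linarith)
  unfold KC; positivity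

lemma aC_le (ν : ℝ) (hν : (1:ℝ)/2 < ν + 1) (n : ℕ) :
    aC ν n ≤ KC ν * 2^n / Nat.factorial n := by
  have hn : (0:ℝ) ≤ (n:ℝ) := Nat.cast_nonneg n
  have hΓν : 0 < Real.Gamma (ν + 1) := Real.Gamma_pos_of_pos (by linarith)
  have h1 : (0:ℝ) < (n:ℝ) + ν + 1 := by linarith
  have hΓ : 0 < Real.Gamma ((n:ℝ) + ν + 1) := Real.Gamma_pos_of_pos h1
  have hf : (0:ℝ) < (Nat.factorial n : ℝ) := by positivity
  have key : Real.Gamma (ν+1) ≤ 2^n * Real.Gamma ((n:ℝ)+ν+1) := by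
    have hg := gamma_lb ν hν n
    have hone : (1/2:ℝ)^n * 2^n = 1 := by rw [← mul_pow]; norm_num
    nlinarith [pow_pos (show (0:ℝ) < 2 by norm_num) n]
  have hinv : 1/Real.Gamma (ν+1) * Real.Gamma (ν+1) = 1 := one_div_mul_cancel hΓν.ne'
  unfold aC KC
  rw [div_le_div_iff₀ (by positivity) hf]
  calc 1 * (Nat.factorial n : ℝ) = (Nat.factorial n : ℝ) * (1/Real.Gamma (ν+1) * Real.Gamma (ν+1)) := by
        rw [hinv]; ring
  _ ≤ (Nat.factorial n : ℝ) * (1/Real.Gamma (ν+1) * (2^n * Real.Gamma ((n:ℝ)+ν+1))) := by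
        refine mul_le_mul_of_nonneg_left (mul_le_mul_of_nonneg_left key (by positivity)) hf.le
  _ = 1 / Real.Gamma (ν+1) * 2^n * ((Nat.factorial n : ℝ) * Real.Gamma ((n:ℝ)+ν+1)) := by ring

lemma term_bound (ν : ℝ) (hν : (1:ℝ)/2 < ν + 1) {s : ℝ} (hs : |s| ≤ 1/15) (n : ℕ) :
    |aC ν n * s ^ n| ≤ 15 * KC ν * (2/15)^n := by
  have ha := aC_pos ν hν n
  have hk := KC_pos ν hν
  have hf : (1:ℝ) ≤ (Nat.factorial n : ℝ) := by
    exact_mod_cast Nat.one_le_iff_ne_zero.mpr (Nat.factorial_ne_zero n)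
  rw [abs_mul, abs_of_pos ha, abs_pow]
  calc aC ν n * |s|^n ≤ (KC ν * 2^n / Nat.factorial n) * (1/15)^n := by
        have h1 := aC_le ν hν n
        gcongr
  _ ≤ (KC ν * 2^n / 1) * (1/15)^n := by gcongr
  _ ≤ 15 * KC ν * (2/15)^n := by
        rw [div_one, show (2/15:ℝ)^n = 2^n * (1/15)^n by rw [← mul_pow]; norm_num]
        have hx : (0:ℝ) ≤ 2^n * (1/15)^n := by positivity
        nlinarith

lemma dterm_bound (ν : ℝ) (hν : (1:ℝ)/2 < ν + 1) {s : ℝ} (hs : |s| ≤ 1/15) (n : ℕ) :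
    |(n:ℝ) * aC ν n * s ^ (n-1)| ≤ 15 * KC ν * (2/15)^n := by
  have ha := aC_pos ν hν n
  have hk := KC_pos ν hν
  have hfn : (n:ℝ) ≤ (Nat.factorial n : ℝ) := by exact_mod_cast Nat.self_le_factorial n
  have hfpos : (0:ℝ) < (Nat.factorial n : ℝ) := by positivity
  rw [abs_mul, abs_mul, abs_pow, Nat.abs_cast, abs_of_pos ha]
  have h15 : (1/15:ℝ)^(n-1) ≤ 15 * (1/15)^n := by
    cases n with
    | zero => norm_num
    | succ m =>
      have : 15 * (1/15:ℝ)^(m+1) = (1/15)^m := by rw [pow_succ]; ring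
      rw [Nat.add_sub_cancel, this]
  have hsp : |s|^(n-1) ≤ 15 * (1/15)^n := le_trans (pow_le_pow_left₀ (abs_nonneg s) hs _) h15
  calc (n:ℝ) * aC ν n * |s|^(n-1)
      ≤ (Nat.factorial n : ℝ) * (KC ν * 2^n / Nat.factorial n) * (15 * (1/15)^n) := by
        have h1 := aC_le ν hν n
        gcongr
  _ = 15 * KC ν * (2/15)^n := by field_simp; ring_nf; rw [← mul_pow]; norm_num

lemma summable_u (ν : ℝ) : Summable (fun n : ℕ => 15 * KC ν * (2/15:ℝ)^n) :=
  (summable_geometric_of_lt_one (by norm_num) (by norm_num)).mul_left _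

lemma tsum_u (ν : ℝ) : ∑' n : ℕ, 15 * KC ν * (2/15:ℝ)^n = MC ν := by
  rw [tsum_mul_left, tsum_geometric_of_lt_one (by norm_num) (by norm_num), MC]

lemma abs_tsum_le_MC (ν : ℝ) {f : ℕ → ℝ} (hb : ∀ n, |f n| ≤ 15 * KC ν * (2/15:ℝ)^n) :
    |∑' n, f n| ≤ MC ν := by
  have hsu := summable_u ν
  have hsf : Summable f := hsu.of_norm_bounded (by simpa using hb)
  calc |∑' n, f n| ≤ ∑' n, |f n| := by
        simpa using norm_tsum_le_tsum_norm (f := f) (by simpa using hsf.abs)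
  _ ≤ ∑' n : ℕ, 15 * KC ν * (2/15:ℝ)^n := Summable.tsum_le_tsum hb hsf.abs hsu
  _ = MC ν := tsum_u ν

lemma hF_bound (ν : ℝ) (hν : (1:ℝ)/2 < ν + 1) {s : ℝ} (hs : |s| ≤ 1/15) : |hF ν s| ≤ MC ν :=
  abs_tsum_le_MC ν (term_bound ν hν hs)

lemma hD_bound (ν : ℝ) (hν : (1:ℝ)/2 < ν + 1) {s : ℝ} (hs : |s| ≤ 1/15) : |hD ν s| ≤ MC ν :=
  abs_tsum_le_MC ν (dterm_bound ν hν hs)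

lemma MC_pos (ν : ℝ) (hν : (1:ℝ)/2 < ν + 1) : 0 < MC ν := by
  have := KC_pos ν hν; unfold MC; positivity

lemma hF_hasDeriv (ν : ℝ) (hν : (1:ℝ)/2 < ν + 1) {s : ℝ}
    (hs : s ∈ Ioo (-(1/15) : ℝ) (1/15)) : HasDerivAt (hF ν) (hD ν s) s := by
  refine hasDerivAt_tsum_of_isPreconnected (𝕜 := ℝ) (F := ℝ) (g := fun n z => aC ν n * z ^ n) (g' := fun n z => (n:ℝ) * aC ν n * z ^ (n-1)) (y₀ := 0) (summable_u ν) isOpen_Ioo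
    (convex_Ioo _ _).isPreconnected ?_ ?_ ?_ ?_ hs
  · intro n y _
    have := (hasDerivAt_pow n y).const_mul (aC ν n)
    rwa [show aC ν n * ((n:ℝ) * y^(n-1)) = (n:ℝ) * aC ν n * y^(n-1) by ring] at this
  · intro n y hy
    have hys : |y| ≤ 1/15 := by
      rw [abs_le]; exact ⟨by linarith [hy.1], le_of_lt hy.2⟩
    rw [Real.norm_eq_abs]; exact dterm_bound ν hν hys n
  · exact ⟨by norm_num, by norm_num⟩
  · refine (summable_u ν).of_norm_bounded ?_
    intro n
    rw [Real.norm_eq_abs]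
    exact term_bound ν hν (s := 0) (by norm_num) n

lemma besselI_eq (ν u : ℝ) : besselI ν u = (u/2)^ν * hF ν ((u/2)^2) := by
  unfold besselI hF aC
  rw [← tsum_mul_left]
  exact tsum_congr fun n => by rw [← pow_mul]; ring

lemma TB_eq (β t y : ℝ) (ht : 0 < t) (hy : 0 < y) {x : ℝ} (hx : 0 < x) :
    TB β t x y = (y ^ β / ((4*t) ^ (β - 1/2) * (2*t))) *
      (x ^ β * (hF (β - 1/2) ((x * (y/(4*t)))^2) * Real.exp (-(x^2+y^2)/(4*t)))) := by
  have hxy : 0 < x * y := mul_pos hx hy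
  have h4t : 0 < 4 * t := by linarith
  unfold TB
  rw [besselI_eq]
  have harg : (x*y/(2*t))/2 = x * (y/(4*t)) := by field_simp; ring
  rw [harg]
  have hbase : x * (y/(4*t)) = (x*y)/(4*t) := by ring
  rw [hbase]
  have h1 : ((x*y)/(4*t)) ^ (β - 1/2) = (x*y) ^ (β - 1/2) / (4*t) ^ (β - 1/2) :=
    Real.div_rpow hxy.le h4t.le _
  have h2 : (x*y) ^ ((1:ℝ)/2) * (x*y) ^ (β - 1/2) = (x*y) ^ β := by
    rw [← Real.rpow_add hxy]; norm_num
  have h3 : (x*y) ^ β = x ^ β * y ^ β := Real.mul_rpow hx.le hy.le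
  have key : (x*y) ^ ((1:ℝ)/2) * (x*y) ^ (β - 1/2) = x ^ β * y ^ β := by rw [h2]; exact h3
  rw [h1]
  set P := hF (β - 1/2) ((x*y/(4*t))^2) with hP
  set C := (4*t) ^ (β - 1/2) with hC
  set E := Real.exp (-(x^2+y^2)/(4*t)) with hE
  set a := (x*y) ^ ((1:ℝ)/2) with ha
  set b := (x*y) ^ (β - 1/2) with hb
  linear_combination P * E / (C * (2*t)) * key

set_option maxHeartbeats 2000000 in
theorem bessel_kernel_derivative_bound_small (β : ℝ) (hβ : 0 < β) :
    ∃ C c : ℝ, 0 < C ∧ 0 < c ∧ ∀ t x y : ℝ, 0 < t → 0 < x → 0 < y → x*y ≤ t →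
      |deriv (fun x' => TB β t x' y) x| ≤
        C * t ^ (-(1:ℝ)/2) * (x*y/t) ^ β * Real.exp (-(x^2+y^2)/(c*t)) * (1/x + x/t) := by
  set ν := β - 1/2 with hνdef
  have hν : (1:ℝ)/2 < ν + 1 := by rw [hνdef]; linarith
  have hM := MC_pos ν hν
  set c4 := (4:ℝ) ^ ν with hc4
  have hc4pos : 0 < c4 := Real.rpow_pos_of_pos (by norm_num) ν
  refine ⟨(β + 2) * MC ν / (2 * c4), 4, by positivity, by norm_num, ?_⟩
  intro t x y ht hx hy hxyt
  have hq : β*(1/x) + (1/8)*(1/x) + (1/2)*(x/t) ≤ (β+2)*(1/x + x/t) := by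
    have h1 : 0 < 1/x := one_div_pos.mpr hx
    have h2 : 0 < x/t := div_pos hx ht
    have h3 : 0 ≤ β * (x/t) := by positivity
    have hexp : (β+2)*(1/x + x/t) = β*(1/x) + β*(x/t) + 2*(1/x) + 2*(x/t) := by ring
    linarith
  set w := y / (4*t) with hw
  have h4t : (0:ℝ) < 4 * t := by linarith
  have hwpos : 0 < w := by positivity
  have hxw : 0 < x * w := by positivity
  have hxwle : x * w ≤ 1/4 := by
    rw [hw, show x * (y/(4*t)) = (x*y)/(4*t) by ring]
    calc (x*y)/(4*t) ≤ t/(4*t) := by gcongr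
    _ = 1/4 := by field_simp
  set S := (x*w)^2 with hS
  have hSmem : S ∈ Ioo (-(1/15) : ℝ) (1/15) := by
    constructor
    · have : (0:ℝ) ≤ S := by positivity
      linarith
    · have h16 : S ≤ 1/16 := by
        rw [hS, show (1/16 : ℝ) = (1/4)^2 by norm_num]
        exact pow_le_pow_left₀ hxw.le hxwle 2
      linarith
  have hSabs : |S| ≤ 1/15 := by
    rw [abs_of_nonneg (by positivity : (0:ℝ) ≤ S)]
    linarith [hSmem.2]
  set Hs := hF ν S with hHs
  set Ds := hD ν S with hDs
  set E := Real.exp (-(x^2+y^2)/(4*t)) with hE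
  have hEpos : 0 < E := Real.exp_pos _
  -- derivative pieces
  have hrpow : HasDerivAt (fun x' : ℝ => x' ^ β) (β * x ^ (β-1)) x :=
    Real.hasDerivAt_rpow_const (Or.inl hx.ne')
  have hInner : HasDerivAt (fun x' : ℝ => (x'*w)^2) ((2:ℕ) * (x*w)^(2-1) * w) x :=
    by have := (hasDerivAt_pow 2 (x*w)).comp x (hasDerivAt_mul_const w); exact this
  have hHder : HasDerivAt (fun x' : ℝ => hF ν ((x'*w)^2)) (Ds * ((2:ℕ) * (x*w)^(2-1) * w)) x :=
    by have := (hF_hasDeriv ν hν hSmem).comp x hInner; exact this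
  have hexpin : HasDerivAt (fun x' : ℝ => -(x'^2+y^2)/(4*t)) (-((2:ℕ) * x^(2-1))/(4*t)) x :=
    (((hasDerivAt_pow 2 x).add_const (y^2)).neg).div_const (4*t)
  have hexp : HasDerivAt (fun x' : ℝ => Real.exp (-(x'^2+y^2)/(4*t)))
      (E * (-((2:ℕ) * x^(2-1))/(4*t))) x := hexpin.exp
  have hG : HasDerivAt (fun x' : ℝ => x' ^ β * (hF ν ((x'*w)^2) * Real.exp (-(x'^2+y^2)/(4*t))))
      (β * x ^ (β-1) * (Hs * E) +
        x ^ β * (Ds * ((2:ℕ) * (x*w)^(2-1) * w) * E + Hs * (E * (-((2:ℕ) * x^(2-1))/(4*t))))) x :=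
    hrpow.mul (hHder.mul hexp)
  set A := y ^ β / ((4*t) ^ ν * (2*t)) with hA
  have hApos : 0 < A := by
    have := Real.rpow_pos_of_pos h4t ν
    have := Real.rpow_pos_of_pos hy β
    positivity
  set dval := β * x ^ (β-1) * (Hs * E) +
      x ^ β * (Ds * ((2:ℕ) * (x*w)^(2-1) * w) * E + Hs * (E * (-((2:ℕ) * x^(2-1))/(4*t)))) with hdval
  have hderiv : deriv (fun x' => TB β t x' y) x = A * dval := by
    have heq : (fun x' => TB β t x' y) =ᶠ[nhds x]
        (fun x' => A * (x' ^ β * (hF ν ((x'*w)^2) * Real.exp (-(x'^2+y^2)/(4*t))))) := by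
      filter_upwards [isOpen_Ioi.mem_nhds hx] with z hz
      exact TB_eq β t y ht hy hz
    rw [heq.deriv_eq]
    exact (hG.const_mul A).deriv
  rw [hderiv]
  -- bound dval
  have hHb : |Hs| ≤ MC ν := hF_bound ν hν hSabs
  have hDb : |Ds| ≤ MC ν := hD_bound ν hν hSabs
  have hxb : x ^ (β-1) = x ^ β / x := by
    rw [show β - 1 = β - (1:ℝ) by norm_num, Real.rpow_sub hx, Real.rpow_one]
  have hxβ : 0 < x ^ β := Real.rpow_pos_of_pos hx β
  have hwb : (2:ℕ) * (x*w)^(2-1) * w ≤ 1/(8*x) := by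
    push_cast
    rw [pow_one, hw]
    rw [show (2:ℝ) * (x * (y/(4*t))) * (y/(4*t)) = (x*y) * y * 2 / (16 * t^2) by ring]
    rw [div_le_div_iff₀ (by positivity) (by positivity)]
    nlinarith [mul_pos hx hy, sq_nonneg t, mul_le_mul_of_nonneg_right hxyt hy.le,
      mul_le_mul_of_nonneg_left hxyt (le_of_lt hx)]
  -- term bounds
  have hxm1 : (0:ℝ) < x ^ (β-1) := Real.rpow_pos_of_pos hx _
  have hWnn : (0:ℝ) ≤ (2:ℕ) * (x*w)^(2-1) * w := by positivity
  have hT1 : |β * x ^ (β-1) * (Hs*E)| ≤ β * x ^ (β-1) * (MC ν * E) := by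
    simp only [abs_mul]
    rw [abs_of_pos hβ, abs_of_pos hxm1, abs_of_pos hEpos]
    gcongr
  have hT2 : |x ^ β * (Ds * ((2:ℕ) * (x*w)^(2-1) * w) * E)| ≤
      x ^ β * (MC ν * (1/(8*x)) * E) := by
    simp only [abs_mul]
    rw [abs_of_pos hxβ, abs_of_pos hEpos, Nat.abs_cast,
      abs_of_pos (pow_pos hxw (2-1)), abs_of_pos hwpos]
    gcongr
  have hT3 : |x ^ β * (Hs * (E * (-((2:ℕ) * x^(2-1))/(4*t))))| ≤
      x ^ β * (MC ν * (E * (x/(2*t)))) := by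
    have habs : |E * (-((2:ℕ) * x^(2-1))/(4*t))| = E * (x/(2*t)) := by
      rw [abs_mul, abs_of_pos hEpos, abs_div, abs_neg, abs_of_pos h4t,
        abs_of_pos (by positivity : (0:ℝ) < ((2:ℕ):ℝ) * x^(2-1))]
      push_cast
      rw [pow_one]
      ring
    rw [abs_mul, abs_mul, abs_of_pos hxβ, habs]
    gcongr
  have hdb : |dval| ≤ β * x ^ (β-1) * (MC ν * E) +
      (x ^ β * (MC ν * (1/(8*x)) * E) + x ^ β * (MC ν * (E * (x/(2*t))))) := by
    rw [hdval]
    calc |β * x ^ (β-1) * (Hs*E) + x ^ β * (Ds * ((2:ℕ) * (x*w)^(2-1) * w) * E +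
            Hs * (E * (-((2:ℕ) * x^(2-1))/(4*t))))|
        ≤ |β * x ^ (β-1) * (Hs*E)| + |x ^ β * (Ds * ((2:ℕ) * (x*w)^(2-1) * w) * E +
            Hs * (E * (-((2:ℕ) * x^(2-1))/(4*t))))| := abs_add_le _ _
      _ ≤ |β * x ^ (β-1) * (Hs*E)| + (|x ^ β * (Ds * ((2:ℕ) * (x*w)^(2-1) * w) * E)| +
            |x ^ β * (Hs * (E * (-((2:ℕ) * x^(2-1))/(4*t))))|) := by
            rw [mul_add (x ^ β)]
            gcongr
            exact abs_add_le _ _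
      _ ≤ _ := by gcongr
  have hP : (0:ℝ) < MC ν * (x ^ β * E) := by positivity
  have hsum : β * x ^ (β-1) * (MC ν * E) +
      (x ^ β * (MC ν * (1/(8*x)) * E) + x ^ β * (MC ν * (E * (x/(2*t))))) ≤
      (β+2) * MC ν * (x ^ β * E) * (1/x + x/t) := by
    rw [hxb]
    calc β * (x ^ β / x) * (MC ν * E) +
        (x ^ β * (MC ν * (1/(8*x)) * E) + x ^ β * (MC ν * (E * (x/(2*t)))))
        = (MC ν * (x ^ β * E)) * (β*(1/x) + (1/8)*(1/x) + (1/2)*(x/t)) := by ring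
      _ ≤ (MC ν * (x ^ β * E)) * ((β+2)*(1/x + x/t)) :=
          mul_le_mul_of_nonneg_left hq hP.le
      _ = (β+2) * MC ν * (x ^ β * E) * (1/x + x/t) := by ring
  -- identity for A * x^β
  have hmul4 : (4*t) ^ ν = c4 * t ^ ν := Real.mul_rpow (by norm_num) ht.le
  have hdivβ : ((x*y)/t) ^ β = (x*y) ^ β / t ^ β := Real.div_rpow (mul_pos hx hy).le ht.le _
  have hmulβ : (x*y) ^ β = x ^ β * y ^ β := Real.mul_rpow hx.le hy.le
  have hT0 : t ^ (-(1:ℝ)/2) * (t ^ ν * t ^ (1:ℝ)) = t ^ β := by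
    rw [← Real.rpow_add ht, ← Real.rpow_add ht,
      show (-(1:ℝ)/2 + (ν + 1)) = β by rw [hνdef]; ring]
  rw [Real.rpow_one] at hT0
  have hAx : A * x ^ β = t ^ (-(1:ℝ)/2) * ((x*y)/t) ^ β / (2*c4) := by
    rw [hA, hmul4, hdivβ, hmulβ]
    have htν : (t:ℝ) ^ ν ≠ 0 := (Real.rpow_pos_of_pos ht ν).ne'
    have htβ : (t:ℝ) ^ β ≠ 0 := (Real.rpow_pos_of_pos ht β).ne'
    field_simp
    rw [show (-(1:ℝ)/2) = -(1/2) by ring] at hT0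
    linear_combination (-1) * hT0
  -- final
  have hdbsum := le_trans hdb hsum
  rw [abs_mul, abs_of_pos hApos]
  refine le_trans (mul_le_mul_of_nonneg_left hdbsum hApos.le) (le_of_eq ?_)
  linear_combination ((β+2) * MC ν * E * (1/x + x/t)) * hAx
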